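/- arXiv:2603.01040 — 4 statements merged into one kernel-verified Lean document; each statement's English description precedes it below -/
import Mathlib

section
/- Let n ≥ 1 and let p, p', q, q' ∈ ℝⁿ be probability vectors. Then |cos(p,q) − cos(p',q')| ≤ 2√n · (‖p − p'‖₂ + ‖q − q'‖₂), where cos(a,b) = ⟨a,b⟩/(‖a‖₂·‖b‖₂). That is, the cosine similarity restricted to the probability simplex in ℝⁿ is Lipschitz in each argument with explicit constant K_cos = 2√n. -/
/-- A probability vector in `ℝⁿ` (with the Euclidean norm). -/
def IsProbVec {n : ℕ} (p : EuclideanSpace ℝ (Fin n)) : Prop :=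
  (∀ i, 0 ≤ p i) ∧ ∑ i, p i = 1

/-- Cosine similarity. -/
noncomputable def cosSim {E : Type*} [NormedAddCommGroup E] [InnerProductSpace ℝ E]
    (a b : E) : ℝ :=
  (inner ℝ a b : ℝ) / (‖a‖ * ‖b‖)

lemma probVec_ne_zero {n : ℕ} {p : EuclideanSpace ℝ (Fin n)} (hp : IsProbVec p) : p ≠ 0 := by
  intro h
  have := hp.2
  simp [h] at this

lemma probVec_norm_lb {n : ℕ} {p : EuclideanSpace ℝ (Fin n)} (hp : IsProbVec p) :
    1 ≤ Real.sqrt n * ‖p‖ := by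
  have hnorm : ‖p‖ = Real.sqrt (∑ i, p i ^ 2) := by
    rw [EuclideanSpace.norm_eq]
    congr 1; apply Finset.sum_congr rfl; intro i _; rw [Real.norm_eq_abs, sq_abs]
  have hcs : (1 : ℝ) ≤ n * ∑ i, p i ^ 2 := by
    have := sq_sum_le_card_mul_sum_sq (s := (Finset.univ : Finset (Fin n))) (f := fun i => p i)
    simpa [hp.2] using this
  have : Real.sqrt 1 ≤ Real.sqrt (n * ∑ i, p i ^ 2) := Real.sqrt_le_sqrt hcs
  rw [Real.sqrt_one, Real.sqrt_mul (by positivity)] at this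
  rw [hnorm]; exact this

lemma probVec_inv_norm_le {n : ℕ} {p : EuclideanSpace ℝ (Fin n)} (hp : IsProbVec p) :
    ‖p‖⁻¹ ≤ Real.sqrt n := by
  have h1 := probVec_norm_lb hp
  have hpos : 0 < ‖p‖ := norm_pos_iff.mpr (probVec_ne_zero hp)
  rw [inv_le_iff_one_le_mul₀ hpos] -- maybe wrong name
  exact h1

lemma normalize_sub_le {E : Type*} [NormedAddCommGroup E] [InnerProductSpace ℝ E]
    {a b : E} (ha : a ≠ 0) (hb : b ≠ 0) :
    ‖‖a‖⁻¹ • a - ‖b‖⁻¹ • b‖ ≤ 2 * ‖a - b‖ * ‖a‖⁻¹ := by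
  have ha' : 0 < ‖a‖ := norm_pos_iff.mpr ha
  have hb' : 0 < ‖b‖ := norm_pos_iff.mpr hb
  have key : ‖a‖⁻¹ • a - ‖b‖⁻¹ • b = ‖a‖⁻¹ • (a - b) + (‖a‖⁻¹ - ‖b‖⁻¹) • b := by
    rw [smul_sub, sub_smul]; abel
  rw [key]
  have h1 : ‖‖a‖⁻¹ • (a - b)‖ = ‖a - b‖ * ‖a‖⁻¹ := by
    rw [norm_smul]; simp [abs_of_pos (inv_pos.mpr ha'), mul_comm]
  have h2 : ‖(‖a‖⁻¹ - ‖b‖⁻¹) • b‖ ≤ ‖a - b‖ * ‖a‖⁻¹ := by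
    rw [norm_smul, Real.norm_eq_abs]
    have heq : ‖a‖⁻¹ - ‖b‖⁻¹ = (‖b‖ - ‖a‖) / (‖a‖ * ‖b‖) := by
      field_simp
    rw [heq, abs_div, abs_of_pos (mul_pos ha' hb')]
    have hub : |‖b‖ - ‖a‖| ≤ ‖a - b‖ := by
      rw [abs_sub_comm]; exact abs_norm_sub_norm_le a b
    calc |‖b‖ - ‖a‖| / (‖a‖ * ‖b‖) * ‖b‖ = |‖b‖ - ‖a‖| * ‖a‖⁻¹ := by
          field_simp
      _ ≤ ‖a - b‖ * ‖a‖⁻¹ := by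
          apply mul_le_mul_of_nonneg_right hub (by positivity)
  calc ‖‖a‖⁻¹ • (a - b) + (‖a‖⁻¹ - ‖b‖⁻¹) • b‖
      ≤ ‖‖a‖⁻¹ • (a - b)‖ + ‖(‖a‖⁻¹ - ‖b‖⁻¹) • b‖ := norm_add_le _ _
    _ ≤ ‖a - b‖ * ‖a‖⁻¹ + ‖a - b‖ * ‖a‖⁻¹ := by rw [h1]; linarith [h2]
    _ = 2 * ‖a - b‖ * ‖a‖⁻¹ := by ring

lemma cosSim_eq_inner_normalize {E : Type*} [NormedAddCommGroup E] [InnerProductSpace ℝ E]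
    (a b : E) : cosSim a b = (inner ℝ (‖a‖⁻¹ • a) (‖b‖⁻¹ • b) : ℝ) := by
  rw [cosSim, real_inner_smul_left, real_inner_smul_right]
  rw [div_eq_mul_inv, mul_inv]
  ring

/-- Cosine similarity restricted to the probability simplex in `ℝⁿ` is Lipschitz in
each argument with explicit constant `K_cos = 2√n`. -/
theorem stmt_3 {n : ℕ} (hn : 1 ≤ n) (p p' q q' : EuclideanSpace ℝ (Fin n))
    (hp : IsProbVec p) (hp' : IsProbVec p') (hq : IsProbVec q) (hq' : IsProbVec q') :
    |cosSim p q - cosSim p' q'| ≤ 2 * Real.sqrt n * (‖p - p'‖ + ‖q - q'‖) := by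
  have hpne := probVec_ne_zero hp
  have hp'ne := probVec_ne_zero hp'
  have hqne := probVec_ne_zero hq
  have hq'ne := probVec_ne_zero hq'
  set u := ‖p‖⁻¹ • p
  set u' := ‖p'‖⁻¹ • p'
  set v := ‖q‖⁻¹ • q
  set v' := ‖q'‖⁻¹ • q'
  have hu' : ‖u'‖ = 1 := norm_smul_inv_norm hp'ne
  have hv : ‖v‖ = 1 := norm_smul_inv_norm hqne
  have e1 : cosSim p q = (inner ℝ u v : ℝ) := cosSim_eq_inner_normalize p q
  have e2 : cosSim p' q' = (inner ℝ u' v' : ℝ) := cosSim_eq_inner_normalize p' q'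
  have split : (inner ℝ u v : ℝ) - inner ℝ u' v' = inner ℝ (u - u') v + inner ℝ u' (v - v') := by
    rw [inner_sub_left, inner_sub_right]; ring
  have b1 : |(inner ℝ (u - u') v : ℝ)| ≤ ‖u - u'‖ := by
    calc |(inner ℝ (u - u') v : ℝ)| ≤ ‖u - u'‖ * ‖v‖ := abs_real_inner_le_norm _ _
      _ = ‖u - u'‖ := by rw [hv, mul_one]
  have b2 : |(inner ℝ u' (v - v') : ℝ)| ≤ ‖v - v'‖ := by
    calc |(inner ℝ u' (v - v') : ℝ)| ≤ ‖u'‖ * ‖v - v'‖ := abs_real_inner_le_norm _ _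
      _ = ‖v - v'‖ := by rw [hu', one_mul]
  have c1 : ‖u - u'‖ ≤ 2 * Real.sqrt n * ‖p - p'‖ := by
    calc ‖u - u'‖ ≤ 2 * ‖p - p'‖ * ‖p‖⁻¹ := normalize_sub_le hpne hp'ne
      _ ≤ 2 * ‖p - p'‖ * Real.sqrt n := by
          apply mul_le_mul_of_nonneg_left (probVec_inv_norm_le hp) (by positivity)
      _ = 2 * Real.sqrt n * ‖p - p'‖ := by ring
  have c2 : ‖v - v'‖ ≤ 2 * Real.sqrt n * ‖q - q'‖ := by
    calc ‖v - v'‖ ≤ 2 * ‖q - q'‖ * ‖q‖⁻¹ := normalize_sub_le hqne hq'ne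
      _ ≤ 2 * ‖q - q'‖ * Real.sqrt n := by
          apply mul_le_mul_of_nonneg_left (probVec_inv_norm_le hq) (by positivity)
      _ = 2 * Real.sqrt n * ‖q - q'‖ := by ring
  calc |cosSim p q - cosSim p' q'| = |(inner ℝ (u - u') v : ℝ) + inner ℝ u' (v - v')| := by
        rw [e1, e2, split]
    _ ≤ |(inner ℝ (u - u') v : ℝ)| + |(inner ℝ u' (v - v') : ℝ)| := abs_add_le _ _
    _ ≤ ‖u - u'‖ + ‖v - v'‖ := add_le_add b1 b2
    _ ≤ 2 * Real.sqrt n * ‖p - p'‖ + 2 * Real.sqrt n * ‖q - q'‖ := add_le_add c1 c2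
    _ = 2 * Real.sqrt n * (‖p - p'‖ + ‖q - q'‖) := by ring
end

section
/- (Dynamic linearized regret of online gradient descent against a moving comparator; Lemma E.1 skeleton.) Let E be a real inner product space, T ≥ 1, η > 0, G ≥ 0 and Γ ≥ 0. Let g₁, …, g_T ∈ E satisfy ‖gₜ‖ ≤ G, and define x_{t+1} = xₜ − η·gₜ for 1 ≤ t ≤ T from an arbitrary x₁ ∈ E. Let u₁, …, u_T ∈ E be a comparator sequence such that ‖x₁ − u₁‖ ≤ Γ and, for every 2 ≤ t ≤ T, both ‖xₜ − uₜ‖ ≤ Γ and ‖xₜ − u_{t−1}‖ ≤ Γ. Let P = Σ_{t=2}^{T} ‖uₜ − u_{t−1}‖ be the path length of the comparator. Then Σ_{t=1}^{T} ⟨gₜ, xₜ − uₜ⟩ ≤ η·T·G²/2 + (Γ² + 2Γ·P) / (2η). -/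
/-- Telescoping with drift: if `a t ≤ b (t-1) + c t` for `2 ≤ t ≤ T`, then
`∑_{t=1}^T (a t - b t) ≤ a 1 - b T + ∑_{t=2}^T c t`. -/
lemma ogd_telescope (a b c : ℕ → ℝ) :
    ∀ T, 1 ≤ T → (∀ t, 2 ≤ t → t ≤ T → a t ≤ b (t - 1) + c t) →
      ∑ t ∈ Finset.Icc 1 T, (a t - b t) ≤ a 1 - b T + ∑ t ∈ Finset.Icc 2 T, c t := by
  intro T hT
  induction T, hT using Nat.le_induction with
  | base =>
    intro _
    simp
  | succ T hT ih =>
    intro h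
    have h1 : 1 ≤ T + 1 := by omega
    rw [Finset.sum_Icc_succ_top (by omega : 1 ≤ T + 1),
        Finset.sum_Icc_succ_top (by omega : 2 ≤ T + 1)]
    have hkey : a (T + 1) ≤ b T + c (T + 1) := by
      have := h (T + 1) (by omega) le_rfl
      simpa using this
    have := ih (fun t h2 hle => h t h2 (by omega))
    linarith

/-- Dynamic linearized regret of online gradient descent against a moving
comparator: with `‖gₜ‖ ≤ G`, iterates `x_{t+1} = xₜ − η·gₜ`, comparators `uₜ`
satisfying the `Γ`-boundedness conditions, and path length
`P = ∑_{t=2}^{T} ‖uₜ − uₜ₋₁‖`, we have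
`∑ₜ ⟨gₜ, xₜ − uₜ⟩ ≤ η·T·G²/2 + (Γ² + 2Γ·P)/(2η)`. -/
theorem stmt_11 {E : Type*} [NormedAddCommGroup E] [InnerProductSpace ℝ E]
    {T : ℕ} (hT : 1 ≤ T) (η G Γ : ℝ) (hη : 0 < η) (hG : 0 ≤ G) (hΓ : 0 ≤ Γ)
    (g x u : ℕ → E)
    (hg : ∀ t, 1 ≤ t → t ≤ T → ‖g t‖ ≤ G)
    (hupd : ∀ t, 1 ≤ t → t ≤ T → x (t + 1) = x t - η • g t)
    (hB1 : ‖x 1 - u 1‖ ≤ Γ)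
    (hB : ∀ t, 2 ≤ t → t ≤ T → ‖x t - u t‖ ≤ Γ ∧ ‖x t - u (t - 1)‖ ≤ Γ) :
    ∑ t ∈ Finset.Icc 1 T, (inner ℝ (g t) (x t - u t) : ℝ) ≤
      η * T * G ^ 2 / 2 +
        (Γ ^ 2 + 2 * Γ * ∑ t ∈ Finset.Icc 2 T, ‖u t - u (t - 1)‖) / (2 * η) := by
  set a : ℕ → ℝ := fun t => ‖x t - u t‖ ^ 2 with ha
  set b : ℕ → ℝ := fun t => ‖x (t + 1) - u t‖ ^ 2 with hb
  -- per-step bound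
  have hstep : ∀ t ∈ Finset.Icc 1 T,
      (inner ℝ (g t) (x t - u t) : ℝ) ≤ (a t - b t) / (2 * η) + η * G ^ 2 / 2 := by
    intro t ht
    rw [Finset.mem_Icc] at ht
    have hbt : b t = a t - 2 * η * (inner ℝ (g t) (x t - u t) : ℝ) + η ^ 2 * ‖g t‖ ^ 2 := by
      simp only [hb, ha, hupd t ht.1 ht.2]
      have : x t - η • g t - u t = (x t - u t) - η • g t := by abel
      rw [this, norm_sub_sq_real, real_inner_smul_right, norm_smul, real_inner_comm]
      simp [abs_of_pos hη, mul_pow]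
      ring
    have hgt : ‖g t‖ ^ 2 ≤ G ^ 2 := by
      have := hg t ht.1 ht.2
      have h0 : (0:ℝ) ≤ ‖g t‖ := norm_nonneg _
      nlinarith
    have : (inner ℝ (g t) (x t - u t) : ℝ)
        = (a t - b t) / (2 * η) + η * ‖g t‖ ^ 2 / 2 := by
      rw [hbt]; field_simp; ring
    rw [this]
    have : η * ‖g t‖ ^ 2 / 2 ≤ η * G ^ 2 / 2 := by nlinarith
    linarith
  have hsum := Finset.sum_le_sum hstep
  have hcard : (Finset.Icc 1 T).card = T := by
    rw [Nat.card_Icc]; omega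
  -- telescoping bound
  have hdrift : ∀ t, 2 ≤ t → t ≤ T →
      a t ≤ b (t - 1) + 2 * Γ * ‖u t - u (t - 1)‖ := by
    intro t h2 hle
    have ht1 : t - 1 + 1 = t := by omega
    obtain ⟨hA, hB'⟩ := hB t h2 hle
    simp only [ha, hb, ht1]
    set A := ‖x t - u t‖
    set B := ‖x t - u (t - 1)‖
    have hd : A - B ≤ ‖u t - u (t - 1)‖ := by
      have := abs_norm_sub_norm_le (x t - u t) (x t - u (t - 1))
      have heq : (x t - u t) - (x t - u (t - 1)) = u (t - 1) - u t := by abel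
      rw [heq, norm_sub_rev (u (t-1)) (u t)] at this
      have := abs_le.mp this
      linarith [this.2]
    have hA0 : (0:ℝ) ≤ A := norm_nonneg _
    have hB0 : (0:ℝ) ≤ B := norm_nonneg _
    have hd0 : (0:ℝ) ≤ ‖u t - u (t - 1)‖ := norm_nonneg _
    nlinarith [mul_nonneg hd0 (add_nonneg hA0 hB0)]
  have htel := ogd_telescope a b (fun t => 2 * Γ * ‖u t - u (t - 1)‖) T hT hdrift
  have ha1 : a 1 ≤ Γ ^ 2 := by
    simp only [ha]
    nlinarith [norm_nonneg (x 1 - u 1)]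
  have hbT : (0:ℝ) ≤ b T := sq_nonneg _
  have hsum2 : ∑ t ∈ Finset.Icc 1 T, (a t - b t)
      ≤ Γ ^ 2 + 2 * Γ * ∑ t ∈ Finset.Icc 2 T, ‖u t - u (t - 1)‖ := by
    rw [Finset.mul_sum]
    calc ∑ t ∈ Finset.Icc 1 T, (a t - b t)
        ≤ a 1 - b T + ∑ t ∈ Finset.Icc 2 T, 2 * Γ * ‖u t - u (t - 1)‖ := htel
      _ ≤ Γ ^ 2 + ∑ t ∈ Finset.Icc 2 T, 2 * Γ * ‖u t - u (t - 1)‖ := by linarith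
  calc ∑ t ∈ Finset.Icc 1 T, (inner ℝ (g t) (x t - u t) : ℝ)
      ≤ ∑ t ∈ Finset.Icc 1 T, ((a t - b t) / (2 * η) + η * G ^ 2 / 2) := hsum
    _ = (∑ t ∈ Finset.Icc 1 T, (a t - b t)) / (2 * η) + T * (η * G ^ 2 / 2) := by
        rw [Finset.sum_add_distrib, ← Finset.sum_div, Finset.sum_const, hcard,
          nsmul_eq_mul]
    _ ≤ (Γ ^ 2 + 2 * Γ * ∑ t ∈ Finset.Icc 2 T, ‖u t - u (t - 1)‖) / (2 * η)
        + T * (η * G ^ 2 / 2) := by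
        have h2η : (0:ℝ) < 2 * η := by positivity
        have := (div_le_div_iff_of_pos_right h2η).mpr hsum2
        linarith
    _ = η * T * G ^ 2 / 2
        + (Γ ^ 2 + 2 * Γ * ∑ t ∈ Finset.Icc 2 T, ‖u t - u (t - 1)‖) / (2 * η) := by
        ring
end

section
/- (Block approximation lemma; term (b) bound in the proof of Theorem 3.) Let X be a nonempty type, let a be an integer and τ ≥ 1, and set J = {a, a+1, …, a+τ−1}. For each t ∈ J let Fₜ : X → ℝ be bounded below, and let vₜ ≥ 0 for a+1 ≤ t ≤ a+τ−1 satisfy |Fₜ(x) − F_{t−1}(x)| ≤ vₜ for all x ∈ X and all a+1 ≤ t ≤ a+τ−1. Then the best fixed decision over the block J is within 2τ·V of the sum of instantaneous optima: inf_{x ∈ X} Σ_{t∈J} Fₜ(x) ≤ Σ_{t∈J} inf_{x ∈ X} Fₜ(x) + 2τ·V, where V = Σ_{t=a+1}^{a+τ−1} vₜ. -/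
/-- Block approximation lemma (term (b) bound): over a block `J = {a, …, a+τ−1}`
of losses `Fₜ : X → ℝ` bounded below, with consecutive-loss variation bounded by
`vₜ`, the best fixed decision over the block is within `2τ·V` of the sum of
instantaneous optima, where `V = ∑_{t=a+1}^{a+τ−1} vₜ`. -/
theorem stmt_12 {X : Type*} [Nonempty X] (a : ℤ) (τ : ℕ) (hτ : 1 ≤ τ)
    (F : ℤ → X → ℝ) (v : ℤ → ℝ)
    (hbdd : ∀ t ∈ Finset.Icc a (a + τ - 1), BddBelow (Set.range (F t)))
    (hv : ∀ t, a + 1 ≤ t → t ≤ a + τ - 1 → 0 ≤ v t)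
    (hvar : ∀ t, a + 1 ≤ t → t ≤ a + τ - 1 → ∀ x : X, |F t x - F (t - 1) x| ≤ v t) :
    ⨅ x : X, ∑ t ∈ Finset.Icc a (a + τ - 1), F t x ≤
      (∑ t ∈ Finset.Icc a (a + τ - 1), ⨅ x : X, F t x) +
        2 * τ * ∑ t ∈ Finset.Icc (a + 1) (a + τ - 1), v t := by
  set J := Finset.Icc a (a + τ - 1) with hJ
  set V := ∑ t ∈ Finset.Icc (a + 1) (a + τ - 1), v t with hVdef
  have hτ' : (1:ℤ) ≤ (τ:ℤ) := by exact_mod_cast hτ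
  have haJ : a ∈ J := by rw [hJ, Finset.mem_Icc]; omega
  have hVnn : 0 ≤ V := Finset.sum_nonneg fun t ht => by
    rw [Finset.mem_Icc] at ht; exact hv t ht.1 ht.2
  have key0 : ∀ t, a ≤ t → (t ≤ a + τ - 1 → ∀ x, |F t x - F a x| ≤
      ∑ s ∈ Finset.Icc (a+1) t, v s) := by
    refine Int.le_induction ?_ ?_
    · intro _ x
      rw [Finset.Icc_eq_empty (by omega)]
      simp
    · intro n hn ih h x
      have ih' := ih (by omega) x
      have h1 := hvar (n+1) (by omega) h x
      simp only [add_sub_cancel_right] at h1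
      rw [show Finset.Icc (a+1) (n+1) = insert (n+1) (Finset.Icc (a+1) n) by
            ext s; simp only [Finset.mem_insert, Finset.mem_Icc]; omega,
          Finset.sum_insert (by simp only [Finset.mem_Icc]; omega)]
      calc |F (n+1) x - F a x| ≤ |F (n+1) x - F n x| + |F n x - F a x| := abs_sub_le _ _ _
        _ ≤ v (n+1) + ∑ s ∈ Finset.Icc (a+1) n, v s := by linarith
  have key : ∀ t, a ≤ t → t ≤ a + τ - 1 → ∀ x, |F t x - F a x| ≤ V := by
    intro t ht1 ht2 x
    refine (key0 t ht1 ht2 x).trans ?_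
    apply Finset.sum_le_sum_of_subset_of_nonneg (Finset.Icc_subset_Icc_right ht2)
    intro s hs _
    rw [Finset.mem_Icc] at hs
    exact hv s hs.1 hs.2
  have hcard : J.card = τ := by
    rw [hJ, Int.card_Icc]
    omega
  have habd := hbdd a haJ
  have hinf_comp : ∀ t ∈ J, (⨅ x, F a x) - V ≤ ⨅ x, F t x := by
    intro t ht
    rw [hJ, Finset.mem_Icc] at ht
    refine le_ciInf fun x => ?_
    have h1 := (abs_sub_le_iff.mp (key t ht.1 ht.2 x)).2
    have h2 := ciInf_le habd x
    linarith
  have hsum_bdd : BddBelow (Set.range fun x => ∑ t ∈ J, F t x) := by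
    refine ⟨∑ t ∈ J, ⨅ y, F t y, ?_⟩
    rintro r ⟨x, rfl⟩
    exact Finset.sum_le_sum fun t ht => ciInf_le (hbdd t ht) x
  have hτpos : (0:ℝ) < τ := by exact_mod_cast Nat.lt_of_lt_of_le Nat.zero_lt_one hτ
  apply le_of_forall_pos_le_add
  intro ε hε
  obtain ⟨x₀, hx₀⟩ := exists_lt_of_ciInf_lt
    (show (⨅ x, F a x) < (⨅ x, F a x) + ε/τ by
      have : 0 < ε/τ := div_pos hε hτpos; linarith)
  have step1 : (⨅ x, ∑ t ∈ J, F t x) ≤ ∑ t ∈ J, F t x₀ := ciInf_le hsum_bdd x₀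
  have step2 : ∑ t ∈ J, F t x₀ ≤ τ * (F a x₀ + V) := by
    calc ∑ t ∈ J, F t x₀ ≤ ∑ t ∈ J, (F a x₀ + V) := by
          refine Finset.sum_le_sum fun t ht => ?_
          rw [hJ, Finset.mem_Icc] at ht
          have := (abs_sub_le_iff.mp (key t ht.1 ht.2 x₀)).1
          linarith
      _ = τ * (F a x₀ + V) := by rw [Finset.sum_const, hcard, nsmul_eq_mul]
  have step3 : (τ:ℝ) * (⨅ x, F a x) ≤ (∑ t ∈ J, ⨅ x, F t x) + τ * V := by
    have : ∑ t ∈ J, ((⨅ x, F a x) - V) ≤ ∑ t ∈ J, ⨅ x, F t x :=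
      Finset.sum_le_sum hinf_comp
    rw [Finset.sum_const, hcard, nsmul_eq_mul] at this
    linarith
  have hFa : F a x₀ ≤ (⨅ x, F a x) + ε/τ := hx₀.le
  have hdiv : (τ:ℝ) * (ε/τ) = ε := by field_simp
  nlinarith [mul_le_mul_of_nonneg_left hFa (le_of_lt hτpos)]
end

section
/- (Deterministic skeleton of Theorem 3, dynamic regret bound.) Let E be a real inner product space, let K ⊆ E be the closed ball of radius Γ/2 centered at the origin (Γ ≥ 0), and let T ≥ 1, τ ≥ 1, η > 0, G ≥ 0. For 1 ≤ t ≤ T let fₜ : E → ℝ be bounded below on K, let xₜ ∈ K, and let gₜ ∈ E satisfy: (i) ‖gₜ‖ ≤ G; (ii) the subgradient inequality fₜ(xₜ) − fₜ(u) ≤ ⟨gₜ, xₜ − u⟩ for all u ∈ K; (iii) x_{t+1} = xₜ − η·gₜ for 1 ≤ t ≤ T−1. Suppose moreover vₜ ≥ 0 satisfies |fₜ(u) − f_{t−1}(u)| ≤ vₜ for all u ∈ K and 2 ≤ t ≤ T, and set V = Σ_{t=2}^{T} vₜ. Then Σ_{t=1}^{T} fₜ(xₜ) − Σ_{t=1}^{T}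 inf_{u∈K} fₜ(u) ≤ η·T·G²/2 + Γ²·(2·⌈T/τ⌉ − 1)/(2η) + 2τ·V. -/
set_option maxHeartbeats 1000000


/-- Deterministic skeleton of Theorem 3 (dynamic regret bound): for subgradient
descent iterates in the closed ball `K` of radius `Γ/2`, with gradient bound `G`,
per-step loss variation `vₜ` on `K`, and block length `τ`, the dynamic regret
against per-round optima over `K` is at most
`η·T·G²/2 + Γ²·(2⌈T/τ⌉ − 1)/(2η) + 2τ·V` where `V = ∑_{t=2}^{T} vₜ`. -/
theorem stmt_13 {E : Type*} [NormedAddCommGroup E] [InnerProductSpace ℝ E]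
    (Γ : ℝ) (hΓ : 0 ≤ Γ) {T τ : ℕ} (hT : 1 ≤ T) (hτ : 1 ≤ τ)
    (η G : ℝ) (hη : 0 < η) (hG : 0 ≤ G)
    (f : ℕ → E → ℝ) (x g : ℕ → E) (v : ℕ → ℝ)
    (hbdd : ∀ t, 1 ≤ t → t ≤ T →
      BddBelow (f t '' Metric.closedBall (0 : E) (Γ / 2)))
    (hx : ∀ t, 1 ≤ t → t ≤ T → x t ∈ Metric.closedBall (0 : E) (Γ / 2))
    (hg : ∀ t, 1 ≤ t → t ≤ T → ‖g t‖ ≤ G)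
    (hsub : ∀ t, 1 ≤ t → t ≤ T → ∀ u ∈ Metric.closedBall (0 : E) (Γ / 2),
      f t (x t) - f t u ≤ (inner ℝ (g t) (x t - u) : ℝ))
    (hupd : ∀ t, 1 ≤ t → t ≤ T - 1 → x (t + 1) = x t - η • g t)
    (hv : ∀ t, 2 ≤ t → t ≤ T → 0 ≤ v t)
    (hvar : ∀ t, 2 ≤ t → t ≤ T → ∀ u ∈ Metric.closedBall (0 : E) (Γ / 2),
      |f t u - f (t - 1) u| ≤ v t) :
    (∑ t ∈ Finset.Icc 1 T, f t (x t)) -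
        (∑ t ∈ Finset.Icc 1 T, ⨅ u : Metric.closedBall (0 : E) (Γ / 2), f t u) ≤
      η * T * G ^ 2 / 2 +
        Γ ^ 2 * (2 * (⌈(T : ℝ) / (τ : ℝ)⌉ : ℝ) - 1) / (2 * η) +
        2 * τ * ∑ t ∈ Finset.Icc 2 T, v t := by
  classical
  set K : Set E := Metric.closedBall (0 : E) (Γ / 2) with hKdef
  have hK0 : (0 : E) ∈ K := by
    simp only [hKdef, Metric.mem_closedBall, dist_self]
    positivity
  haveI : Nonempty K := ⟨⟨0, hK0⟩⟩
  set I : ℕ → ℝ := fun t => ⨅ u : K, f t u with hIdef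
  have h2η : (0:ℝ) < 2 * η := by linarith
  -- basic facts about infima
  have hIbdd : ∀ t, 1 ≤ t → t ≤ T → BddBelow (Set.range fun u : K => f t u) := by
    intro t h1 h2
    rw [← Set.image_eq_range]
    exact hbdd t h1 h2
  have hIle : ∀ t, 1 ≤ t → t ≤ T → ∀ u, u ∈ K → I t ≤ f t u := by
    intro t h1 h2 u hu
    exact ciInf_le (hIbdd t h1 h2) ⟨u, hu⟩
  have hImin : ∀ t, 1 ≤ t → t ≤ T → ∀ ε : ℝ, 0 < ε → ∃ u ∈ K, f t u < I t + ε := by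
    intro t h1 h2 ε hε
    have : iInf (fun u : K => f t u) < I t + ε := lt_add_of_pos_right _ hε
    obtain ⟨u, hu⟩ := exists_lt_of_ciInf_lt this
    exact ⟨u, u.2, hu⟩
  -- diameter bound
  have hdiam : ∀ u, u ∈ K → ∀ w, w ∈ K → ‖u - w‖ ≤ Γ := by
    intro u hu w hw
    rw [hKdef, Metric.mem_closedBall] at hu hw
    rw [← dist_eq_norm]
    calc dist u w ≤ dist u 0 + dist 0 w := dist_triangle u 0 w
    _ = dist u 0 + dist w 0 := by rw [dist_comm (0:E) w]
    _ ≤ Γ / 2 + Γ / 2 := add_le_add hu hw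
    _ = Γ := by ring
  -- OGD per-step identity
  have hkey : ∀ t : ℕ, ∀ u : E, (inner ℝ (g t) (x t - u) : ℝ) =
      (‖x t - u‖^2 - ‖x t - η • g t - u‖^2) / (2*η) + η * ‖g t‖^2 / 2 := by
    intro t u
    have h1 : x t - η • g t - u = (x t - u) - η • g t := by abel
    have h2 := norm_sub_sq_real (x t - u) (η • g t)
    rw [real_inner_smul_right, norm_smul, Real.norm_eq_abs, abs_of_pos hη, mul_pow] at h2
    rw [h1, h2, real_inner_comm]
    field_simp
    ring
  -- telescoping over a block
  have htel : ∀ u, u ∈ K → ∀ a, 1 ≤ a → ∀ b, a ≤ b → b ≤ T →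
      ∑ t ∈ Finset.Icc a b, (inner ℝ (g t) (x t - u) : ℝ) ≤
        (‖x a - u‖^2 - ‖x b - η • g b - u‖^2) / (2*η) +
          ∑ _t ∈ Finset.Icc a b, (η * G^2 / 2) := by
    intro u hu a ha b hab
    induction b, hab using Nat.le_induction with
    | base =>
      intro haT
      rw [Finset.Icc_self, Finset.sum_singleton, Finset.sum_singleton, hkey a u]
      have hga : ‖g a‖^2 ≤ G^2 := pow_le_pow_left₀ (norm_nonneg _) (hg a ha haT) 2
      nlinarith [hη.le]
    | succ b hab ih =>
      intro hbT
      have hbT' : b ≤ T := le_trans (Nat.le_succ b) hbT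
      have ihh := ih hbT'
      have hx' : x (b+1) = x b - η • g b := hupd b (le_trans ha hab) (by omega)
      rw [← hx'] at ihh
      rw [Finset.sum_Icc_succ_top (by omega : a ≤ b + 1),
          Finset.sum_Icc_succ_top (by omega : a ≤ b + 1)]
      have h2 := hkey (b+1) u
      have hgb : ‖g (b+1)‖^2 ≤ G^2 :=
        pow_le_pow_left₀ (norm_nonneg _) (hg (b+1) (by omega) hbT) 2
      have hmono : η * ‖g (b+1)‖^2 / 2 ≤ η * G^2 / 2 := by nlinarith [hη.le]
      have hdiv : (‖x a - u‖^2 - ‖x (b+1) - u‖^2) / (2*η) +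
          (‖x (b+1) - u‖^2 - ‖x (b+1) - η • g (b+1) - u‖^2) / (2*η) =
          (‖x a - u‖^2 - ‖x (b+1) - η • g (b+1) - u‖^2) / (2*η) := by
        field_simp
        ring
      linarith [ihh, h2, hmono, hdiv]
  -- variation bound
  have hvarsum : ∀ a, 1 ≤ a → ∀ u, u ∈ K → ∀ t, a ≤ t → t ≤ T →
      |f t u - f a u| ≤ ∑ r ∈ Finset.Icc (a+1) t, v r := by
    intro a ha u hu t hat
    induction t, hat using Nat.le_induction with
    | base => intro _; simp
    | succ t hat ih =>
      intro hT'
      have h1 := ih (by omega)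
      have h2 := hvar (t+1) (by omega) hT' u hu
      simp only [Nat.add_sub_cancel] at h2
      rw [Finset.sum_Icc_succ_top (by omega : a + 1 ≤ t + 1)]
      calc |f (t+1) u - f a u| ≤ |f (t+1) u - f t u| + |f t u - f a u| :=
            abs_sub_le _ _ _
      _ ≤ (∑ r ∈ Finset.Icc (a+1) t, v r) + v (t+1) := by linarith
  -- block regret lemma
  have hblock : ∀ ε : ℝ, 0 < ε → ∀ a b : ℕ, 1 ≤ a → a ≤ b → b ≤ T → b < a + τ →
      ∑ t ∈ Finset.Icc a b, (f t (x t) - I t) ≤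
        Γ^2/(2*η) + ((b + 1 - a : ℕ) : ℝ) * (η * G^2/2)
          + 2 * τ * (∑ r ∈ Finset.Icc (a+1) b, v r)
          + ((b + 1 - a : ℕ) : ℝ) * (2*ε) := by
    intro ε hε a b ha hab hbT hblen
    have haT : a ≤ T := le_trans hab hbT
    obtain ⟨u, huK, hu⟩ := hImin a ha haT ε hε
    have hVnn : 0 ≤ ∑ r ∈ Finset.Icc (a+1) b, v r := by
      apply Finset.sum_nonneg
      intro r hr
      rw [Finset.mem_Icc] at hr
      exact hv r (by omega) (le_trans hr.2 hbT)
    have hper : ∀ t ∈ Finset.Icc a b, f t (x t) - I t ≤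
        (inner ℝ (g t) (x t - u) : ℝ) + (2 * (∑ r ∈ Finset.Icc (a+1) b, v r) + 2*ε) := by
      intro t ht
      rw [Finset.mem_Icc] at ht
      have h1t : 1 ≤ t := le_trans ha ht.1
      have htT : t ≤ T := le_trans ht.2 hbT
      have hS : ∑ r ∈ Finset.Icc (a+1) t, v r ≤ ∑ r ∈ Finset.Icc (a+1) b, v r := by
        apply Finset.sum_le_sum_of_subset_of_nonneg (Finset.Icc_subset_Icc_right ht.2)
        intro r hr _
        rw [Finset.mem_Icc] at hr
        exact hv r (by omega) (le_trans hr.2 hbT)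
      have hA := abs_le.1 (hvarsum a ha u huK t ht.1 htT)
      obtain ⟨w, hwK, hw⟩ := hImin t h1t htT ε hε
      have hAw := abs_le.1 (hvarsum a ha w hwK t ht.1 htT)
      have hIat : I a ≤ f a w := hIle a ha haT w hwK
      have hsubt := hsub t h1t htT u huK
      linarith [hS, hu, hw, hIat, hsubt, hA.1, hA.2, hAw.1, hAw.2]
    have hsum := Finset.sum_le_sum hper
    have htel' := htel u huK a ha b hab hbT
    have hxa : ‖x a - u‖^2 ≤ Γ^2 := by
      have h := hdiam (x a) (hx a ha haT) u huK
      nlinarith [norm_nonneg (x a - u)]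
    have hnn : (0:ℝ) ≤ ‖x b - η • g b - u‖^2 := sq_nonneg _
    have hcard : (Finset.Icc a b).card = b + 1 - a := Nat.card_Icc a b
    have hcle : ((b + 1 - a : ℕ) : ℝ) ≤ (τ : ℝ) := by
      exact_mod_cast Nat.cast_le.2 (by omega : b + 1 - a ≤ τ)
    have hcnn : (0:ℝ) ≤ ((b + 1 - a : ℕ) : ℝ) := Nat.cast_nonneg _
    rw [Finset.sum_add_distrib, Finset.sum_const, hcard, nsmul_eq_mul] at hsum
    rw [Finset.sum_const, hcard, nsmul_eq_mul] at htel'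
    have hfrac : (‖x a - u‖^2 - ‖x b - η • g b - u‖^2) / (2*η) ≤ Γ^2/(2*η) := by
      apply (div_le_div_iff_of_pos_right h2η).2
      linarith
    have hvterm : ((b + 1 - a : ℕ) : ℝ) * (2 * (∑ r ∈ Finset.Icc (a+1) b, v r) + 2*ε)
        ≤ 2 * τ * (∑ r ∈ Finset.Icc (a+1) b, v r) + ((b + 1 - a : ℕ) : ℝ) * (2*ε) := by
      have := mul_le_mul_of_nonneg_right hcle (by linarith : (0:ℝ) ≤ 2 * (∑ r ∈ Finset.Icc (a+1) b, v r))
      nlinarith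
    linarith [hsum, htel', hfrac, hvterm]
  -- main induction on number of blocks
  have hmain : ∀ ε : ℝ, 0 < ε → ∀ m : ℕ, ∀ n : ℕ, n ≤ T → n ≤ m * τ →
      ∑ t ∈ Finset.Icc 1 n, (f t (x t) - I t) ≤
        η * n * G^2 / 2 + m * (Γ^2/(2*η)) + 2 * τ * (∑ r ∈ Finset.Icc 2 n, v r)
          + 2 * n * ε := by
    intro ε hε m
    induction m with
    | zero =>
      intro n hnT hn
      have : n = 0 := by omega
      subst this
      simp
    | succ m ih =>
      intro n hnT hn
      by_cases hcase : n ≤ m * τ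
      · have h0 := ih n hnT hcase
        have hnn1 : (0:ℝ) ≤ Γ^2/(2*η) := by positivity
        push_cast
        push_cast at h0
        linarith
      · push_neg at hcase
        have hn' : n ≤ m * τ + τ := by
          have : (m+1) * τ = m * τ + τ := by ring
          omega
        have hsplit : ∑ t ∈ Finset.Icc 1 n, (f t (x t) - I t) =
            (∑ t ∈ Finset.Icc 1 (m*τ), (f t (x t) - I t))
              + ∑ t ∈ Finset.Icc (m*τ+1) n, (f t (x t) - I t) := by
          rw [show Finset.Icc 1 n = Finset.Ioc 0 n from Finset.Icc_add_one_left_eq_Ioc 0 n,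
              show Finset.Icc 1 (m*τ) = Finset.Ioc 0 (m*τ) from Finset.Icc_add_one_left_eq_Ioc 0 (m*τ),
              show Finset.Icc (m*τ+1) n = Finset.Ioc (m*τ) n from Finset.Icc_add_one_left_eq_Ioc (m*τ) n]
          exact (Finset.sum_Ioc_consecutive _ (Nat.zero_le _) (le_of_lt hcase)).symm
        have hpre := ih (m*τ) (le_trans (le_of_lt hcase) hnT) le_rfl
        have hblk := hblock ε hε (m*τ+1) n (by omega) (by omega) hnT (by omega)
        have hcardcast : ((n + 1 - (m*τ+1) : ℕ) : ℝ) = (n:ℝ) - (m*τ:ℕ) := by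
          have : n + 1 - (m*τ+1) = n - m*τ := by omega
          rw [this, Nat.cast_sub (le_of_lt hcase)]
        rw [hcardcast] at hblk
        have hvsplit : (∑ r ∈ Finset.Icc 2 (m*τ), v r)
            + (∑ r ∈ Finset.Icc (m*τ+1+1) n, v r) ≤ ∑ r ∈ Finset.Icc 2 n, v r := by
          have hdisj : Disjoint (Finset.Icc 2 (m*τ)) (Finset.Icc (m*τ+2) n) := by
            rw [Finset.disjoint_left]
            intro r hr hr'
            rw [Finset.mem_Icc] at hr hr'
            omega
          have hsub' : Finset.Icc 2 (m*τ) ∪ Finset.Icc (m*τ+2) n ⊆ Finset.Icc 2 n := by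
            intro r hr
            rw [Finset.mem_union, Finset.mem_Icc, Finset.mem_Icc] at hr
            rw [Finset.mem_Icc]
            omega
          have := Finset.sum_le_sum_of_subset_of_nonneg hsub' (fun r hr _ => by
            rw [Finset.mem_Icc] at hr
            exact hv r hr.1 (le_trans hr.2 hnT))
          rw [Finset.sum_union hdisj] at this
          have heq : m*τ+1+1 = m*τ+2 := by omega
          rw [heq]
          exact this
        have hτnn : (0:ℝ) ≤ 2 * (τ:ℝ) := by positivity
        have hmulv := mul_le_mul_of_nonneg_left hvsplit hτnn
        rw [hsplit]
        push_cast
        push_cast at hpre hblk hmulv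
        linarith [hpre, hblk, hmulv]
  -- final assembly
  rw [show (∑ t ∈ Finset.Icc 1 T, f t (x t)) -
        (∑ t ∈ Finset.Icc 1 T, ⨅ u : K, f t u) =
        ∑ t ∈ Finset.Icc 1 T, (f t (x t) - I t) from
      (Finset.sum_sub_distrib _ _).symm]
  apply le_of_forall_pos_le_add
  intro ε hε
  set c : ℤ := ⌈(T : ℝ) / (τ : ℝ)⌉ with hc
  have hτpos : (0:ℝ) < (τ:ℝ) := by exact_mod_cast Nat.pos_of_ne_zero (by omega)
  have hTpos : (0:ℝ) < (T:ℝ) := by exact_mod_cast Nat.pos_of_ne_zero (by omega)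
  have hc1 : 1 ≤ c := Int.ceil_pos.2 (div_pos hTpos hτpos)
  have hNc : ((c.toNat : ℕ) : ℝ) = (c : ℝ) := by
    have h0 : ((c.toNat : ℤ)) = c := Int.toNat_of_nonneg (by linarith)
    exact_mod_cast congrArg (fun z : ℤ => (z : ℝ)) h0
  have hTN : T ≤ c.toNat * τ := by
    have h1 : (T:ℝ) / τ ≤ (c:ℝ) := Int.le_ceil _
    have h2 : (T:ℝ) ≤ (c:ℝ) * τ := by
      rw [div_le_iff₀ hτpos] at h1; exact h1
    have h3 : (T:ℝ) ≤ ((c.toNat * τ : ℕ) : ℝ) := by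
      push_cast
      rw [hNc]
      exact h2
    exact_mod_cast h3
  have hεT : (0:ℝ) < ε / (2*T) := by positivity
  have hmn := hmain (ε / (2*T)) hεT c.toNat T le_rfl hTN
  have hεeq : 2 * (T:ℝ) * (ε / (2*T)) = ε := by field_simp
  have hN1 : (1:ℝ) ≤ ((c.toNat : ℕ) : ℝ) := by
    rw [hNc]; exact_mod_cast hc1
  have hfin : ((c.toNat : ℕ) : ℝ) * (Γ^2/(2*η)) ≤ Γ^2 * (2*(c:ℝ) - 1)/(2*η) := by
    rw [← hNc,
      show ((c.toNat : ℕ) : ℝ) * (Γ^2/(2*η)) = ((c.toNat : ℕ) : ℝ) * Γ^2 / (2*η) from by ring]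
    apply (div_le_div_iff_of_pos_right h2η).2
    have hmm : (0:ℝ) ≤ Γ^2 * (((c.toNat : ℕ) : ℝ) - 1) :=
      mul_nonneg (sq_nonneg Γ) (by linarith)
    linarith [hmm]
  linarith [hmn, hfin]
end
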